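/- Suppose n is an odd positive integer satisfying n²(1 − ρ(n)) ≤ 4(0.621·η(n) + 1.216·ω(n) + 2.085), where ρ(n) = ∑_{p|n} 1/p², η(n) = 2∑_{p|n} log p, ω(n) the number of distinct prime factors. Then n ≤ 3. -/

import Mathlib

open Real Finset

lemma tele_aux (n : ℕ) (hn : 2 ≤ n) :
    ∑ k ∈ Finset.Icc 3 n, (1:ℝ)/(((k:ℝ)-1)*k) = 1/2 - 1/n := by
  induction n, hn using Nat.le_induction with
  | base => rw [Finset.Icc_eq_empty (by omega)]; norm_num
  | succ n hn ih =>
    rw [Finset.sum_Icc_succ_top (by omega : 3 ≤ n + 1), ih]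
    have h0 : (n:ℝ) ≠ 0 := by positivity
    have h1 : (n:ℝ) + 1 ≠ 0 := by positivity
    push_cast
    field_simp
    ring_nf; rw [mul_inv_cancel₀ h0]; ring

lemma log_lt_two_of_lt (x : ℝ) (hx : 0 < x) (h7 : x < 7.3) : Real.log x < 2 := by
  rw [Real.log_lt_iff_lt_exp hx]
  have h := Real.exp_one_gt_d9
  have h2 : Real.exp 2 = Real.exp 1 * Real.exp 1 := by rw [← Real.exp_add]; norm_num
  nlinarith

lemma log11_lt_three : Real.log 11 < 3 := by
  rw [Real.log_lt_iff_lt_exp (by norm_num)]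
  have h := Real.exp_one_gt_d9
  have h3 : Real.exp 3 = Real.exp 1 * Real.exp 1 * Real.exp 1 := by
    rw [← Real.exp_add, ← Real.exp_add]; norm_num
  nlinarith [Real.exp_pos 1]

theorem stmt_14 (n : ℕ) (hn : 0 < n) (hodd : Odd n)
    (hineq : (n : ℝ) ^ 2 * (1 - ∑ p ∈ n.primeFactors, (1 : ℝ) / (p : ℝ) ^ 2)
      ≤ 4 * (0.621 * (2 * ∑ p ∈ n.primeFactors, Real.log p)
        + 1.216 * (n.primeFactors.card : ℝ) + 2.085)) :
    n ≤ 3 := by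
  by_contra hgt
  push_neg at hgt
  have hodd' : n % 2 = 1 := Nat.odd_iff.mp hodd
  -- every prime factor is odd, ≥ 3, ≤ n
  have hmem : ∀ p ∈ n.primeFactors, 3 ≤ p ∧ p ≤ n := by
    intro p hp
    have hpp : p.Prime := Nat.prime_of_mem_primeFactors hp
    have hdvd : p ∣ n := Nat.dvd_of_mem_primeFactors hp
    have h2 := hpp.two_le
    have hne2 : p ≠ 2 := by
      rintro rfl; omega
    exact ⟨by omega, Nat.le_of_dvd hn hdvd⟩
  rcases (by omega : n = 5 ∨ n = 7 ∨ n = 9 ∨ n = 11 ∨ 13 ≤ n) with h5 | h7 | h9 | h11 | h13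
  -- small cases: single prime factor, direct numeric contradiction
  · subst h5
    rw [Nat.Prime.primeFactors (by norm_num)] at hineq
    simp only [Finset.sum_singleton, Finset.card_singleton] at hineq
    have hl : Real.log 5 < 2 := log_lt_two_of_lt 5 (by norm_num) (by norm_num)
    push_cast at hineq
    nlinarith
  · subst h7
    rw [Nat.Prime.primeFactors (by norm_num)] at hineq
    simp only [Finset.sum_singleton, Finset.card_singleton] at hineq
    have hl : Real.log 7 < 2 := log_lt_two_of_lt 7 (by norm_num) (by norm_num)
    push_cast at hineq
    nlinarith
  · subst h9
    rw [show (9:ℕ) = 3^2 by norm_num, Nat.primeFactors_pow _ (by norm_num),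
      Nat.Prime.primeFactors (by norm_num)] at hineq
    simp only [Finset.sum_singleton, Finset.card_singleton] at hineq
    have hl : Real.log 3 < 2 := log_lt_two_of_lt 3 (by norm_num) (by norm_num)
    push_cast at hineq
    nlinarith
  · subst h11
    rw [Nat.Prime.primeFactors (by norm_num)] at hineq
    simp only [Finset.sum_singleton, Finset.card_singleton] at hineq
    have hl : Real.log 11 < 3 := log11_lt_three
    push_cast at hineq
    nlinarith
  -- general case n ≥ 13
  · have hnR : (13:ℝ) ≤ (n:ℝ) := by exact_mod_cast h13
    have hn0 : (0:ℝ) < (n:ℝ) := by positivity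
    -- bound on rho
    have hrho : ∑ p ∈ n.primeFactors, (1:ℝ) / (p:ℝ)^2 ≤ 1/2 := by
      have step1 : ∑ p ∈ n.primeFactors, (1:ℝ) / (p:ℝ)^2
          ≤ ∑ p ∈ n.primeFactors, (1:ℝ)/(((p:ℝ)-1)*p) := by
        apply Finset.sum_le_sum
        intro p hp
        have h3 : 3 ≤ p := (hmem p hp).1
        have h3R : (3:ℝ) ≤ (p:ℝ) := by exact_mod_cast h3
        have hpos : (0:ℝ) < ((p:ℝ)-1)*p := by nlinarith
        rw [div_le_div_iff₀ (by positivity) hpos]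
        nlinarith
      have step2 : ∑ p ∈ n.primeFactors, (1:ℝ)/(((p:ℝ)-1)*p)
          ≤ ∑ k ∈ Finset.Icc 3 n, (1:ℝ)/(((k:ℝ)-1)*k) := by
        apply Finset.sum_le_sum_of_subset_of_nonneg
        · intro p hp
          rw [Finset.mem_Icc]
          exact hmem p hp
        · intro k hk _
          rw [Finset.mem_Icc] at hk
          have h3R : (3:ℝ) ≤ (k:ℝ) := by exact_mod_cast hk.1
          have : (0:ℝ) < ((k:ℝ)-1)*k := by nlinarith
          positivity
      have step3 := tele_aux n (by omega)
      have : (0:ℝ) < 1/(n:ℝ) := by positivity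
      linarith
    -- bound on sum of logs
    have hL : ∑ p ∈ n.primeFactors, Real.log p ≤ Real.log n := by
      have hprod : ∏ p ∈ n.primeFactors, p ∣ n := Nat.prod_primeFactors_dvd n
      have hle : (∏ p ∈ n.primeFactors, p) ≤ n := Nat.le_of_dvd hn hprod
      have hpos : ∀ p ∈ n.primeFactors, (p:ℝ) ≠ 0 := by
        intro p hp
        have h3 := (hmem p hp).1
        exact_mod_cast (by omega : p ≠ 0)
      have hcast : ∏ p ∈ n.primeFactors, (p:ℝ) = ((∏ p ∈ n.primeFactors, p : ℕ) : ℝ) := by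
        push_cast; ring
      have hprodpos : 0 < ∏ p ∈ n.primeFactors, p := Nat.pos_of_dvd_of_pos hprod hn
      rw [← Real.log_prod hpos, hcast]
      exact Real.log_le_log (by exact_mod_cast hprodpos) (by exact_mod_cast hle)
    -- each log p ≥ 1
    have hcard : (n.primeFactors.card : ℝ) ≤ ∑ p ∈ n.primeFactors, Real.log p := by
      have h := Finset.card_nsmul_le_sum n.primeFactors (fun p => Real.log p) 1 (by
        intro p hp
        have h3 : (3:ℝ) ≤ (p:ℝ) := by exact_mod_cast (hmem p hp).1
        rw [Real.le_log_iff_exp_le (by linarith)]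
        have := Real.exp_one_lt_d9
        linarith)
      simpa using h
    -- log n ≤ 2 * sqrt n - 2
    set s := Real.sqrt n with hs
    have hs0 : 0 < s := Real.sqrt_pos.mpr hn0
    have hss : s * s = (n:ℝ) := Real.mul_self_sqrt (le_of_lt hn0)
    have hlogn : Real.log n ≤ 2*s - 2 := by
      have h1 : Real.log s ≤ s - 1 := Real.log_le_sub_one_of_pos hs0
      have h2 : Real.log s = Real.log n / 2 := Real.log_sqrt (le_of_lt hn0)
      linarith
    -- combine
    have hlhs : (n:ℝ)^2 * (1/2) ≤ (n:ℝ)^2 * (1 - ∑ p ∈ n.primeFactors, (1:ℝ)/(p:ℝ)^2) := by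
      apply mul_le_mul_of_nonneg_left (by linarith) (by positivity)
    nlinarith [sq_nonneg (s - 18/5), sq_nonneg ((n:ℝ) - 13), hineq, hlhs]
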